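/- Let F ∈ ℂ[X] be a polynomial of degree n ≥ 2, let m ∈ ℂ, r > 0, and let k be an integer with 0 ≤ k ≤ n. Suppose the open disk D(m, r/(16n)) contains exactly k roots of F counted with multiplicity, and that F has no root z with r/(16n) ≤ |z − m| < 16·n⁴·r. Then T_k(m, r, 3/2, F) holds. -/

import Mathlib

open Polynomial Finset

noncomputable def Complex.abs : AbsoluteValue ℂ ℝ where
  toFun x := ‖x‖
  map_mul' := norm_mul
  nonneg' := norm_nonneg
  eq_zero' _ := norm_eq_zero
  add_le' := norm_add_le

lemma Complex.abs_eq_norm' (x : ℂ) : Complex.abs x = ‖x‖ := rfl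

lemma Complex.abs_natCast (n : ℕ) : Complex.abs (n : ℂ) = n := by
  rw [Complex.abs_eq_norm', Complex.norm_natCast]

lemma abs_multiset_sum_le (s : Multiset ℂ) :
    Complex.abs s.sum ≤ (s.map Complex.abs).sum := by
  induction s using Multiset.induction with
  | empty => simp
  | cons a s ih =>
    simp only [Multiset.sum_cons, Multiset.map_cons]
    exact (Complex.abs.add_le _ _).trans (by linarith)

lemma multiset_prod_le_pow (s : Multiset ℝ) (q : ℝ)
    (h0 : ∀ x ∈ s, 0 ≤ x) (h : ∀ x ∈ s, x ≤ q) :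
    s.prod ≤ q ^ Multiset.card s := by
  induction s using Multiset.induction with
  | empty => simp
  | cons a s ih =>
    simp only [Multiset.prod_cons, Multiset.card_cons, pow_succ']
    have hq : 0 ≤ q := (h0 a (Multiset.mem_cons_self _ _)).trans (h a (Multiset.mem_cons_self _ _))
    have hsp : 0 ≤ s.prod := Multiset.prod_nonneg fun x hx => h0 x (Multiset.mem_cons_of_mem hx)
    exact mul_le_mul (h a (Multiset.mem_cons_self _ _))
      (ih (fun x hx => h0 x (Multiset.mem_cons_of_mem hx)) (fun x hx => h x (Multiset.mem_cons_of_mem hx)))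
      hsp hq

lemma pow_le_multiset_prod (s : Multiset ℝ) (q : ℝ) (hq : 0 ≤ q)
    (h : ∀ x ∈ s, q ≤ x) :
    q ^ Multiset.card s ≤ s.prod := by
  induction s using Multiset.induction with
  | empty => simp
  | cons a s ih =>
    simp only [Multiset.prod_cons, Multiset.card_cons, pow_succ']
    exact mul_le_mul (h a (Multiset.mem_cons_self _ _))
      (ih fun x hx => h x (Multiset.mem_cons_of_mem hx))
      (pow_nonneg hq _) ((hq.trans (h a (Multiset.mem_cons_self _ _))))

/-- upper bound on coefficients of `∏ (X - a)` when all `|a| ≤ q`. -/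
lemma coeff_abs_le_inside (s : Multiset ℂ) (q : ℝ) (hq : 0 ≤ q)
    (h : ∀ x ∈ s, Complex.abs x ≤ q) (j : ℕ) (hj : j ≤ Multiset.card s) :
    Complex.abs ((Multiset.map (fun a => X - C a) s).prod.coeff j) ≤
      ((Multiset.card s).choose (Multiset.card s - j)) * q ^ (Multiset.card s - j) := by
  rw [Multiset.prod_X_sub_C_coeff s hj]
  set d := Multiset.card s - j with hd
  rw [map_mul, map_pow, map_neg_eq_map, map_one, one_pow, one_mul]
  unfold Multiset.esymm
  calc Complex.abs (Multiset.map Multiset.prod (s.powersetCard d)).sum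
      ≤ ((Multiset.map Multiset.prod (s.powersetCard d)).map Complex.abs).sum :=
        abs_multiset_sum_le _
    _ ≤ _ := by
        rw [Multiset.map_map]
        have hb : ∀ x ∈ (s.powersetCard d).map (Complex.abs ∘ Multiset.prod), x ≤ q ^ d := by
          intro x hx
          obtain ⟨t, ht, rfl⟩ := Multiset.mem_map.mp hx
          obtain ⟨hts, htc⟩ := Multiset.mem_powersetCard.mp ht
          have : Complex.abs t.prod = (t.map Complex.abs).prod := map_multiset_prod _ _
          simp only [Function.comp_apply, this]
          calc (t.map Complex.abs).prod ≤ q ^ Multiset.card (t.map Complex.abs) := by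
                refine multiset_prod_le_pow _ _ ?_ ?_ <;> intro x hx <;>
                  obtain ⟨y, hy, rfl⟩ := Multiset.mem_map.mp hx
                · exact AbsoluteValue.nonneg _ _
                · exact h y (Multiset.mem_of_le hts hy)
            _ = q ^ d := by rw [Multiset.card_map, htc]
        calc ((s.powersetCard d).map (Complex.abs ∘ Multiset.prod)).sum
            ≤ (Multiset.card ((s.powersetCard d).map (Complex.abs ∘ Multiset.prod))) • (q ^ d) :=
              Multiset.sum_le_card_nsmul _ _ hb
          _ = ((Multiset.card s).choose d) • (q ^ d) := by
              rw [Multiset.card_map, Multiset.card_powersetCard]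
          _ = _ := by rw [nsmul_eq_mul]

/-- upper bound on coefficients of `∏ (X - a)` when all `|a| ≥ R > 0`. -/
lemma coeff_abs_le_outside (s : Multiset ℂ) (R : ℝ) (hR : 0 < R)
    (h : ∀ x ∈ s, R ≤ Complex.abs x) (j : ℕ) (hj : j ≤ Multiset.card s) :
    Complex.abs ((Multiset.map (fun a => X - C a) s).prod.coeff j) ≤
      ((Multiset.card s).choose (Multiset.card s - j)) *
        ((s.map Complex.abs).prod / R ^ j) := by
  rw [Multiset.prod_X_sub_C_coeff s hj]
  set d := Multiset.card s - j with hd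
  rw [map_mul, map_pow, map_neg_eq_map, map_one, one_pow, one_mul]
  unfold Multiset.esymm
  set P := (s.map Complex.abs).prod with hP
  calc Complex.abs (Multiset.map Multiset.prod (s.powersetCard d)).sum
      ≤ ((Multiset.map Multiset.prod (s.powersetCard d)).map Complex.abs).sum :=
        abs_multiset_sum_le _
    _ ≤ _ := by
        rw [Multiset.map_map]
        have hb : ∀ x ∈ (s.powersetCard d).map (Complex.abs ∘ Multiset.prod),
            x ≤ P / R ^ j := by
          intro x hx
          obtain ⟨t, ht, rfl⟩ := Multiset.mem_map.mp hx
          obtain ⟨hts, htc⟩ := Multiset.mem_powersetCard.mp ht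
          have habs : Complex.abs t.prod = (t.map Complex.abs).prod := map_multiset_prod _ _
          simp only [Function.comp_apply, habs]
          -- s = (s - t) + t
          have hsplit : (s - t) + t = s := tsub_add_cancel_of_le hts
          have hPsplit : P = ((s - t).map Complex.abs).prod * (t.map Complex.abs).prod := by
            rw [hP, ← hsplit, Multiset.map_add, Multiset.prod_add, hsplit]
          have hcard : Multiset.card (s - t) = j := by
            rw [Multiset.card_sub hts, htc, hd]
            omega
          have hlow : R ^ j ≤ ((s - t).map Complex.abs).prod := by
            rw [← hcard, ← Multiset.card_map Complex.abs (s - t)]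
            refine pow_le_multiset_prod _ _ hR.le ?_
            intro x hx
            obtain ⟨y, hy, rfl⟩ := Multiset.mem_map.mp hx
            exact h y (Multiset.mem_of_le (tsub_le_self) hy)
          have htnn : 0 ≤ (t.map Complex.abs).prod :=
            Multiset.prod_nonneg (by
              intro x hx; obtain ⟨y, hy, rfl⟩ := Multiset.mem_map.mp hx
              exact AbsoluteValue.nonneg _ _)
          rw [hPsplit, le_div_iff₀ (pow_pos hR j)]
          calc (t.map Complex.abs).prod * R ^ j ≤
              (t.map Complex.abs).prod * ((s - t).map Complex.abs).prod :=
                mul_le_mul_of_nonneg_left hlow htnn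
            _ = _ := mul_comm _ _
        calc ((s.powersetCard d).map (Complex.abs ∘ Multiset.prod)).sum
            ≤ (Multiset.card ((s.powersetCard d).map (Complex.abs ∘ Multiset.prod))) •
                (P / R ^ j) := Multiset.sum_le_card_nsmul _ _ hb
          _ = ((Multiset.card s).choose d) • (P / R ^ j) := by
              rw [Multiset.card_map, Multiset.card_powersetCard]
          _ = _ := by rw [nsmul_eq_mul]


/-- The Pellet test `T_k(m, r, K, F)`:
`|F^{(k)}(m)|·r^k/k! > K·∑_{0 ≤ i ≤ deg F, i ≠ k} |F^{(i)}(m)|·r^i/i!`. -/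
def TkTest (F : Polynomial ℂ) (m : ℂ) (r K : ℝ) (k : ℕ) : Prop :=
  K * ∑ i ∈ (Finset.range (F.natDegree + 1)).erase k,
      ‖(Polynomial.derivative^[i] F).eval m‖ * r ^ i / (Nat.factorial i) <
    ‖(Polynomial.derivative^[k] F).eval m‖ * r ^ k / (Nat.factorial k)

open Classical in
/-- The number of roots of `F` (counted with multiplicity) in the open disk `D(m, r)`. -/
noncomputable def rootsInDisk (F : Polynomial ℂ) (m : ℂ) (r : ℝ) : ℕ :=
  Multiset.card (F.roots.filter fun z => ‖z - m‖ < r)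

set_option maxHeartbeats 4000000 in
/-- **Corollary**: if the disk `D(m,r)` is `(1/(16n), 16n⁴)`-isolating for a set of `k`
roots of `F` (counted with multiplicity), then `T_k(m, r, 3/2, F)` holds. -/
theorem tkTest_cor (F : Polynomial ℂ) (n : ℕ) (hn : 2 ≤ n) (hdeg : F.natDegree = n)
    (m : ℂ) (r : ℝ) (hr : 0 < r) (k : ℕ) (hk : k ≤ n)
    (hin : rootsInDisk F m (r / (16 * n)) = k)
    (hann : ∀ z ∈ F.roots,
      ¬(r / (16 * n) ≤ ‖z - m‖ ∧ ‖z - m‖ < 16 * n ^ 4 * r)) :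
    TkTest F m r (3 / 2) k := by
  classical
  simp only [← Complex.abs_eq_norm'] at hann
  have hnn : 0 < n := by omega
  have hn0 : (0:ℝ) < n := by exact_mod_cast hnn
  set rho : ℝ := r / (16 * n) with hrho
  set R : ℝ := 16 * n ^ 4 * r with hR
  have hrhopos : 0 < rho := by rw [hrho]; positivity
  have hRpos : 0 < R := by rw [hR]; positivity
  have hF : F ≠ 0 := by
    intro h
    rw [h, natDegree_zero] at hdeg
    omega
  have hsplits : Splits F := IsAlgClosed.splits F
  have hcroots : Multiset.card F.roots = n := by
    rw [← hdeg]; exact (splits_iff_card_roots).mp hsplits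
  set W : Multiset ℂ := F.roots.map (fun z => z - m) with hW
  set A : Multiset ℂ := W.filter (fun w => Complex.abs w < rho) with hA
  set B : Multiset ℂ := W.filter (fun w => ¬ Complex.abs w < rho) with hB
  have hAB : A + B = W := Multiset.filter_add_not _ _
  have hcardW : Multiset.card W = n := by rw [hW, Multiset.card_map, hcroots]
  have hcardA : Multiset.card A = k := by
    rw [hA, hW, Multiset.filter_map, Multiset.card_map]
    unfold rootsInDisk at hin
    simp only [← Complex.abs_eq_norm'] at hin
    convert hin using 2
    exact Multiset.filter_congr (fun _ _ => Iff.rfl)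
  have hcardB : Multiset.card B = n - k := by
    have := congrArg Multiset.card hAB
    rw [Multiset.card_add, hcardA, hcardW] at this
    omega
  have hAbound : ∀ w ∈ A, Complex.abs w ≤ rho := fun w hw =>
    ((Multiset.mem_filter.mp hw).2).le
  have hBbound : ∀ w ∈ B, R ≤ Complex.abs w := by
    intro w hw
    have hnlt : ¬ Complex.abs w < rho := (Multiset.mem_filter.mp hw).2
    have hwW : w ∈ W := (Multiset.mem_filter.mp hw).1
    rw [hW] at hwW
    obtain ⟨z, hz, rfl⟩ := Multiset.mem_map.mp hwW
    have h2 := hann z hz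
    by_contra hcon
    push_neg at hcon hnlt
    exact h2 ⟨hnlt, hcon⟩
  set pA : Polynomial ℂ := (A.map (fun a => X - C a)).prod with hpA
  set pB : Polynomial ℂ := (B.map (fun a => X - C a)).prod with hpB
  set P : ℝ := (B.map Complex.abs).prod with hP
  have hPpos : 0 < P := by
    have h1 : R ^ (Multiset.card (B.map Complex.abs)) ≤ P := by
      refine pow_le_multiset_prod _ _ hRpos.le ?_
      intro x hx
      obtain ⟨y, hy, rfl⟩ := Multiset.mem_map.mp hx
      exact hBbound y hy
    exact lt_of_lt_of_le (pow_pos hRpos _) h1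
  -- the Taylor shift identity
  have hWprod : ((W.map (fun a => X - C a)).prod : Polynomial ℂ) =
      ((F.roots.map (fun z => X - C z)).prod).comp (X + C m) := by
    rw [multiset_prod_comp, Multiset.map_map, Multiset.map_map]
    congr 1
    apply Multiset.map_congr rfl
    intro z _
    simp only [Function.comp_apply, sub_comp, X_comp, C_comp, map_sub]
    ring
  have htaylor : Polynomial.taylor m F = C F.leadingCoeff * (pA * pB) := by
    rw [taylor_apply]
    conv_lhs => rw [hsplits.eq_prod_roots]
    rw [mul_comp, C_comp, ← hWprod, ← hAB, Multiset.map_add, Multiset.prod_add]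
  -- the coefficients of the Taylor shift
  have hcoeff : ∀ i, Complex.abs ((derivative^[i] F).eval m) =
      (i.factorial : ℝ) * (Complex.abs F.leadingCoeff *
        Complex.abs ((pA * pB).coeff i)) := by
    intro i
    have h1 : derivative^[i] F = i.factorial • Polynomial.hasseDeriv i F := by
      rw [← Polynomial.factorial_smul_hasseDeriv]; rfl
    rw [h1, eval_smul, nsmul_eq_mul, map_mul, Complex.abs_natCast]
    congr 1
    rw [← Polynomial.taylor_coeff, htaylor, coeff_C_mul, map_mul]
  have hterm : ∀ i, Complex.abs ((derivative^[i] F).eval m) * r ^ i / (i.factorial : ℝ) =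
      Complex.abs F.leadingCoeff * (Complex.abs ((pA * pB).coeff i) * r ^ i) := by
    intro i
    rw [hcoeff i]
    have : (i.factorial : ℝ) ≠ 0 := by exact_mod_cast i.factorial_ne_zero
    field_simp
  rw [TkTest, hdeg]
  simp only [← Complex.abs_eq_norm']
  simp only [hterm]
  -- set up the bounding functions
  set fA : ℕ → ℝ := fun x => if x ≤ k then (16:ℝ)⁻¹ ^ (k - x) else 0 with hfA
  set fB : ℕ → ℝ := fun y => if y ≤ n - k then ((16:ℝ) * (n:ℝ)^3)⁻¹ ^ y else 0 with hfB
  have hfAnn : ∀ x, 0 ≤ fA x := by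
    intro x; rw [hfA]; dsimp only; split <;> positivity
  have hfBnn : ∀ y, 0 ≤ fB y := by
    intro y; rw [hfB]; dsimp only; split <;> positivity
  have hpAdeg : pA.natDegree = k := by
    rw [hpA, natDegree_multiset_prod_X_sub_C_eq_card, hcardA]
  have hpBdeg : pB.natDegree = n - k := by
    rw [hpB, natDegree_multiset_prod_X_sub_C_eq_card, hcardB]
  have hgA : ∀ x, Complex.abs (pA.coeff x) * r ^ x ≤ r ^ k * fA x := by
    intro x
    by_cases hx : x ≤ k
    · have h1 : Complex.abs (pA.coeff x) ≤ (k.choose (k - x)) * rho ^ (k - x) := by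
        have := coeff_abs_le_inside A rho hrhopos.le hAbound x (by omega)
        rwa [hcardA] at this
      have h2 : ((k.choose (k - x)) : ℝ) ≤ (n:ℝ) ^ (k - x) := by
        calc ((k.choose (k - x)) : ℝ) ≤ ((k:ℝ)) ^ (k - x) := by
              exact_mod_cast Nat.choose_le_pow _ _
          _ ≤ (n:ℝ) ^ (k - x) := by
              apply pow_le_pow_left₀ (by positivity)
              exact_mod_cast hk
      have h3 : (n:ℝ) * rho = r / 16 := by
        rw [hrho]; field_simp
      have h4 : Complex.abs (pA.coeff x) * r ^ x ≤ (r/16) ^ (k - x) * r ^ x := by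
        calc Complex.abs (pA.coeff x) * r ^ x
            ≤ ((k.choose (k - x)) * rho ^ (k - x)) * r ^ x := by
              apply mul_le_mul_of_nonneg_right h1 (by positivity)
          _ ≤ ((n:ℝ) ^ (k - x) * rho ^ (k - x)) * r ^ x := by
              apply mul_le_mul_of_nonneg_right _ (by positivity)
              apply mul_le_mul_of_nonneg_right h2 (by positivity)
          _ = ((n:ℝ) * rho) ^ (k - x) * r ^ x := by rw [mul_pow]
          _ = (r/16) ^ (k - x) * r ^ x := by rw [h3]
      have h5 : (r/16) ^ (k - x) * r ^ x = r ^ k * (16:ℝ)⁻¹ ^ (k - x) := by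
        rw [div_eq_mul_inv, mul_pow, ← pow_mul_pow_sub r hx]
        ring
      rw [hfA]
      simp only [hx, if_true]
      rw [← h5]
      exact h4
    · have hz : pA.coeff x = 0 := by
        apply coeff_eq_zero_of_natDegree_lt
        omega
      rw [hfA]
      simp [hz, hx]
  have hgB : ∀ y, Complex.abs (pB.coeff y) * r ^ y ≤ P * fB y := by
    intro y
    by_cases hy : y ≤ n - k
    · have h1 : Complex.abs (pB.coeff y) ≤
          ((n - k).choose ((n - k) - y)) * (P / R ^ y) := by
        have := coeff_abs_le_outside B R hRpos hBbound y (by omega)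
        rwa [hcardB, ← hP] at this
      have h2 : (((n - k).choose ((n - k) - y)) : ℝ) ≤ (n:ℝ) ^ y := by
        rw [Nat.choose_symm hy]
        calc (((n - k).choose y) : ℝ) ≤ ((n - k : ℕ) : ℝ) ^ y := by
              exact_mod_cast Nat.choose_le_pow _ _
          _ ≤ (n:ℝ) ^ y := by
              apply pow_le_pow_left₀ (by positivity)
              exact_mod_cast Nat.sub_le n k
      have hne : (n:ℝ) ≠ 0 := ne_of_gt hn0
      have hrne : r ≠ 0 := ne_of_gt hr
      have hRne : R ≠ 0 := ne_of_gt hRpos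
      have h3 : (n:ℝ) * r / R = ((16:ℝ) * (n:ℝ)^3)⁻¹ := by
        rw [hR]
        field_simp
      have h4 : ((n:ℝ)^y * (P / R^y)) * r^y = P * ((n:ℝ) * r / R)^y := by
        field_simp
        rw [← mul_pow, ← mul_pow]; congr 1; field_simp
      rw [hfB]
      simp only [hy, if_true]
      calc Complex.abs (pB.coeff y) * r^y
          ≤ (((n - k).choose ((n - k) - y)) * (P / R^y)) * r^y := by
            apply mul_le_mul_of_nonneg_right h1 (by positivity)
        _ ≤ ((n:ℝ)^y * (P / R^y)) * r^y := by
            apply mul_le_mul_of_nonneg_right _ (by positivity)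
            apply mul_le_mul_of_nonneg_right h2 (by positivity)
        _ = P * ((n:ℝ) * r / R)^y := h4
        _ = P * ((16:ℝ) * (n:ℝ)^3)⁻¹ ^ y := by rw [h3]
    · have hz : pB.coeff y = 0 := by
        apply coeff_eq_zero_of_natDegree_lt
        omega
      rw [hfB]
      simp [hz, hy]
  -- geometric facts
  have hgeom16 : ∀ N : ℕ, (∑ y ∈ Finset.range N, ((16:ℝ)⁻¹) ^ y) ≤ 16/15 := by
    intro N
    have h := geom_sum_Ico_le_of_lt_one (x := (16:ℝ)⁻¹) (by norm_num) (by norm_num)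
      (m := 0) (n := N)
    rw [← Finset.range_eq_Ico] at h
    calc (∑ y ∈ Finset.range N, ((16:ℝ)⁻¹) ^ y) ≤ (16:ℝ)⁻¹ ^ 0 / (1 - 16⁻¹) := h
      _ = 16/15 := by norm_num
  have hsumA : ∑ x ∈ Finset.range (n+1), fA x ≤ 16/15 := by
    have h1 : ∑ x ∈ Finset.range (n+1), fA x = ∑ x ∈ Finset.range (k+1), fA x := by
      symm
      apply Finset.sum_subset (Finset.range_subset_range.mpr (by omega))
      intro x hx hnx
      rw [Finset.mem_range] at hnx
      rw [hfA]
      simp only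
      rw [if_neg (by omega)]
    have h2 : ∑ x ∈ Finset.range (k+1), fA x
        = ∑ x ∈ Finset.range (k+1), ((16:ℝ)⁻¹) ^ (k - x) := by
      apply Finset.sum_congr rfl
      intro x hx
      rw [Finset.mem_range] at hx
      rw [hfA]
      simp only
      rw [if_pos (by omega)]
    have h3 := Finset.sum_range_reflect (fun j => ((16:ℝ)⁻¹) ^ j) (k+1)
    have h4 : ∑ x ∈ Finset.range (k+1), ((16:ℝ)⁻¹) ^ (k - x)
        = ∑ j ∈ Finset.range (k+1), ((16:ℝ)⁻¹) ^ j := by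
      rw [← h3]
      apply Finset.sum_congr rfl
      intro x hx
      rw [Finset.mem_range] at hx
      congr 1
    rw [h1, h2, h4]
    exact hgeom16 _
  have hfB_le : ∀ y, fB y ≤ ((16:ℝ)⁻¹) ^ y := by
    intro y
    rw [hfB]
    simp only
    split
    · apply pow_le_pow_left₀ (by positivity)
      apply inv_anti₀ (by norm_num)
      have h1n : (1:ℝ) ≤ (n:ℝ)^3 := one_le_pow₀ (by exact_mod_cast hnn)
      linarith
    · positivity
  have hsumB : ∑ y ∈ Finset.range (n+1), fB y ≤ 16/15 :=
    le_trans (Finset.sum_le_sum fun y _ => hfB_le y) (hgeom16 _)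
  -- special coefficients
  have hpAk : Complex.abs (pA.coeff k) = 1 := by
    have hmonic : pA.Monic :=
      monic_multiset_prod_of_monic _ _ (fun a _ => monic_X_sub_C a)
    have h1 : pA.coeff k = 1 := by
      rw [← hpAdeg]; exact hmonic.coeff_natDegree
    rw [h1, map_one]
  have hpB0 : Complex.abs (pB.coeff 0) = P := by
    rw [coeff_zero_eq_eval_zero, hpB, eval_multiset_prod, Multiset.map_map,
      map_multiset_prod, Multiset.map_map, hP]
    apply congrArg
    apply Multiset.map_congr rfl
    intro w _
    simp only [Function.comp_apply, eval_sub, eval_X, eval_C, zero_sub, map_neg_eq_map]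
  -- the combined bound function
  set g : ℕ × ℕ → ℝ := fun p =>
    (Complex.abs (pA.coeff p.1) * r ^ p.1) * (Complex.abs (pB.coeff p.2) * r ^ p.2) with hg
  have hgnn : ∀ p, 0 ≤ g p := by intro p; rw [hg]; positivity
  have hrk : (0:ℝ) < r ^ k := by positivity
  have hrkP : (0:ℝ) < r ^ k * P := mul_pos hrk hPpos
  set S := ∑ i ∈ (Finset.range (n+1)).erase k,
    Complex.abs ((pA * pB).coeff i) * r ^ i with hS
  -- upper bound on S
  have hupper : S ≤ (31/225) * (r ^ k * P) := by
    have step1 : S ≤ ∑ i ∈ (Finset.range (n+1)).erase k,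
        ∑ p ∈ Finset.HasAntidiagonal.antidiagonal i, g p := by
      apply Finset.sum_le_sum
      intro i _
      rw [coeff_mul]
      calc Complex.abs (∑ p ∈ Finset.HasAntidiagonal.antidiagonal i, pA.coeff p.1 * pB.coeff p.2) * r ^ i
          ≤ (∑ p ∈ Finset.HasAntidiagonal.antidiagonal i,
              Complex.abs (pA.coeff p.1 * pB.coeff p.2)) * r ^ i := by
            apply mul_le_mul_of_nonneg_right (Complex.abs.sum_le _ _) (by positivity)
        _ = ∑ p ∈ Finset.HasAntidiagonal.antidiagonal i, g p := by
            rw [Finset.sum_mul]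
            apply Finset.sum_congr rfl
            intro p hp
            have hpsum : p.1 + p.2 = i := Finset.HasAntidiagonal.mem_antidiagonal.mp hp
            rw [map_mul, ← hpsum, pow_add, hg]
            ring
    have hdisj : (↑((Finset.range (n+1)).erase k) : Set ℕ).PairwiseDisjoint
        Finset.HasAntidiagonal.antidiagonal := by
      intro i _ j _ hij
      apply Finset.disjoint_left.mpr
      intro p hpi hpj
      exact hij ((Finset.HasAntidiagonal.mem_antidiagonal.mp hpi).symm.trans (Finset.HasAntidiagonal.mem_antidiagonal.mp hpj))
    have step2 : ∑ i ∈ (Finset.range (n+1)).erase k, ∑ p ∈ Finset.HasAntidiagonal.antidiagonal i, g p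
        = ∑ p ∈ ((Finset.range (n+1)).erase k).biUnion Finset.HasAntidiagonal.antidiagonal, g p :=
      (Finset.sum_biUnion hdisj).symm
    have hsub : ((Finset.range (n+1)).erase k).biUnion Finset.HasAntidiagonal.antidiagonal ⊆
        ((Finset.range (n+1)) ×ˢ (Finset.range (n+1))).erase (k, 0) := by
      intro p hp
      rw [Finset.mem_biUnion] at hp
      obtain ⟨i, hi, hpi⟩ := hp
      rw [Finset.mem_erase, Finset.mem_range] at hi
      have hpsum : p.1 + p.2 = i := Finset.HasAntidiagonal.mem_antidiagonal.mp hpi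
      rw [Finset.mem_erase, Finset.mem_product, Finset.mem_range, Finset.mem_range]
      refine ⟨?_, by omega, by omega⟩
      intro hcon
      rw [hcon] at hpsum
      simp at hpsum
      omega
    have step3 : ∑ p ∈ ((Finset.range (n+1)).erase k).biUnion Finset.HasAntidiagonal.antidiagonal, g p
        ≤ ∑ p ∈ ((Finset.range (n+1)) ×ˢ (Finset.range (n+1))).erase (k, 0), g p :=
      Finset.sum_le_sum_of_subset_of_nonneg hsub (fun p _ _ => hgnn p)
    have hmem : ((k, 0) : ℕ × ℕ) ∈ (Finset.range (n+1)) ×ˢ (Finset.range (n+1)) := by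
      rw [Finset.mem_product, Finset.mem_range, Finset.mem_range]
      omega
    have step4 : ∑ p ∈ ((Finset.range (n+1)) ×ˢ (Finset.range (n+1))).erase (k, 0), g p
        = (∑ p ∈ (Finset.range (n+1)) ×ˢ (Finset.range (n+1)), g p) - g (k, 0) := by
      have := Finset.add_sum_erase _ g hmem
      linarith
    have step5 : ∑ p ∈ (Finset.range (n+1)) ×ˢ (Finset.range (n+1)), g p
        = (∑ x ∈ Finset.range (n+1), Complex.abs (pA.coeff x) * r ^ x) *
          (∑ y ∈ Finset.range (n+1), Complex.abs (pB.coeff y) * r ^ y) := by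
      rw [Finset.sum_mul_sum]
      rw [← Finset.sum_product']
    have hgk0 : g (k, 0) = r ^ k * P := by
      rw [hg]
      simp only [hpAk, hpB0, pow_zero, one_mul, mul_one]
    have hSA : ∑ x ∈ Finset.range (n+1), Complex.abs (pA.coeff x) * r ^ x
        ≤ r ^ k * (16/15) := by
      calc ∑ x ∈ Finset.range (n+1), Complex.abs (pA.coeff x) * r ^ x
          ≤ ∑ x ∈ Finset.range (n+1), r ^ k * fA x :=
            Finset.sum_le_sum fun x _ => hgA x
        _ = r ^ k * ∑ x ∈ Finset.range (n+1), fA x := by rw [Finset.mul_sum]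
        _ ≤ r ^ k * (16/15) := by
            apply mul_le_mul_of_nonneg_left hsumA hrk.le
    have hSB : ∑ y ∈ Finset.range (n+1), Complex.abs (pB.coeff y) * r ^ y
        ≤ P * (16/15) := by
      calc ∑ y ∈ Finset.range (n+1), Complex.abs (pB.coeff y) * r ^ y
          ≤ ∑ y ∈ Finset.range (n+1), P * fB y :=
            Finset.sum_le_sum fun y _ => hgB y
        _ = P * ∑ y ∈ Finset.range (n+1), fB y := by rw [Finset.mul_sum]
        _ ≤ P * (16/15) := by
            apply mul_le_mul_of_nonneg_left hsumB hPpos.le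
    have hSAnn : 0 ≤ ∑ x ∈ Finset.range (n+1), Complex.abs (pA.coeff x) * r ^ x :=
      Finset.sum_nonneg fun x _ => by positivity
    have hprodbound : ∑ p ∈ (Finset.range (n+1)) ×ˢ (Finset.range (n+1)), g p
        ≤ (r ^ k * (16/15)) * (P * (16/15)) := by
      rw [step5]
      exact mul_le_mul hSA hSB (Finset.sum_nonneg fun y _ => by positivity)
        (by positivity)
    calc S ≤ ∑ i ∈ (Finset.range (n+1)).erase k, ∑ p ∈ Finset.HasAntidiagonal.antidiagonal i, g p := step1
      _ = _ := step2
      _ ≤ _ := step3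
      _ = (∑ p ∈ (Finset.range (n+1)) ×ˢ (Finset.range (n+1)), g p) - g (k, 0) := step4
      _ ≤ (r ^ k * (16/15)) * (P * (16/15)) - r ^ k * P := by
          rw [hgk0]; linarith
      _ = (31/225) * (r ^ k * P) := by ring
  -- lower bound on the k-th coefficient
  have hlower : (63/64) * (r ^ k * P) ≤ Complex.abs ((pA * pB).coeff k) * r ^ k := by
    rw [coeff_mul]
    have hmem : ((k, 0) : ℕ × ℕ) ∈ Finset.HasAntidiagonal.antidiagonal k := by
      rw [Finset.HasAntidiagonal.mem_antidiagonal]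
      simp
    have hsplit := Finset.add_sum_erase (Finset.HasAntidiagonal.antidiagonal k)
      (fun p => pA.coeff p.1 * pB.coeff p.2) hmem
    set T := ∑ p ∈ (Finset.HasAntidiagonal.antidiagonal k).erase (k, 0),
      pA.coeff p.1 * pB.coeff p.2 with hT
    have habs : Complex.abs (pA.coeff k * pB.coeff 0) - Complex.abs T ≤
        Complex.abs (pA.coeff k * pB.coeff 0 + T) := by
      have h := Complex.abs.add_le (pA.coeff k * pB.coeff 0 + T) (-T)
      rw [add_neg_cancel_right, map_neg_eq_map] at h
      linarith
    have h1 : Complex.abs (pA.coeff k * pB.coeff 0) = P := by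
      rw [map_mul, hpAk, hpB0, one_mul]
    -- bound on the tail
    have hTbound : Complex.abs T * r ^ k ≤ (1/64) * (r ^ k * P) := by
      have hper : ∀ p ∈ (Finset.HasAntidiagonal.antidiagonal k).erase (k, 0),
          Complex.abs (pA.coeff p.1 * pB.coeff p.2) * r ^ k ≤
            ((16:ℝ) * (n:ℝ)^3)⁻¹ * (r ^ k * P) := by
        intro p hp
        rw [Finset.mem_erase] at hp
        have hpsum : p.1 + p.2 = k := Finset.HasAntidiagonal.mem_antidiagonal.mp hp.2
        have hp2 : 1 ≤ p.2 := by
          rcases Nat.eq_zero_or_pos p.2 with h0 | h0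
          · exfalso; apply hp.1
            have : p.1 = k := by omega
            rw [← this, ← h0]
          · exact h0
        have e1 : Complex.abs (pA.coeff p.1 * pB.coeff p.2) * r ^ k =
            (Complex.abs (pA.coeff p.1) * r ^ p.1) *
            (Complex.abs (pB.coeff p.2) * r ^ p.2) := by
          rw [map_mul, ← hpsum, pow_add]; ring
        rw [e1]
        have e2 : (Complex.abs (pA.coeff p.1) * r ^ p.1) *
            (Complex.abs (pB.coeff p.2) * r ^ p.2) ≤ (r ^ k * fA p.1) * (P * fB p.2) :=
          mul_le_mul (hgA p.1) (hgB p.2) (by positivity)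
            (by positivity)
        have e3 : fA p.1 * fB p.2 ≤ ((16:ℝ) * (n:ℝ)^3)⁻¹ := by
          rw [hfA, hfB]
          simp only
          split
          · split
            · calc ((16:ℝ)⁻¹) ^ (k - p.1) * (((16:ℝ) * (n:ℝ)^3)⁻¹) ^ p.2
                  ≤ 1 * (((16:ℝ) * (n:ℝ)^3)⁻¹) ^ p.2 := by
                    apply mul_le_mul_of_nonneg_right _ (by positivity)
                    apply pow_le_one₀ (by norm_num) (by norm_num)
                _ ≤ 1 * ((16:ℝ) * (n:ℝ)^3)⁻¹ := by
                    apply mul_le_mul_of_nonneg_left _ (by norm_num)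
                    apply pow_le_of_le_one (by positivity) ?_ (by omega)
                    rw [inv_le_one_iff₀]
                    right
                    have h1n : (1:ℝ) ≤ (n:ℝ)^3 := one_le_pow₀ (by exact_mod_cast hnn)
                    linarith
                _ = ((16:ℝ) * (n:ℝ)^3)⁻¹ := one_mul _
            · rw [mul_zero]; positivity
          · rw [zero_mul]; positivity
        calc (Complex.abs (pA.coeff p.1) * r ^ p.1) *
            (Complex.abs (pB.coeff p.2) * r ^ p.2)
            ≤ (r ^ k * fA p.1) * (P * fB p.2) := e2
          _ = (fA p.1 * fB p.2) * (r ^ k * P) := by ring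
          _ ≤ ((16:ℝ) * (n:ℝ)^3)⁻¹ * (r ^ k * P) := by
              apply mul_le_mul_of_nonneg_right e3 hrkP.le
      have hcard : ((Finset.HasAntidiagonal.antidiagonal k).erase (k, 0)).card = k := by
        rw [Finset.card_erase_of_mem hmem, Finset.Nat.card_antidiagonal]
        omega
      calc Complex.abs T * r ^ k
          ≤ (∑ p ∈ (Finset.HasAntidiagonal.antidiagonal k).erase (k, 0),
              Complex.abs (pA.coeff p.1 * pB.coeff p.2)) * r ^ k := by
            apply mul_le_mul_of_nonneg_right (Complex.abs.sum_le _ _) (by positivity)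
        _ = ∑ p ∈ (Finset.HasAntidiagonal.antidiagonal k).erase (k, 0),
              Complex.abs (pA.coeff p.1 * pB.coeff p.2) * r ^ k := by
            rw [Finset.sum_mul]
        _ ≤ ∑ _p ∈ (Finset.HasAntidiagonal.antidiagonal k).erase (k, 0),
              ((16:ℝ) * (n:ℝ)^3)⁻¹ * (r ^ k * P) := Finset.sum_le_sum hper
        _ = (k : ℝ) * (((16:ℝ) * (n:ℝ)^3)⁻¹ * (r ^ k * P)) := by
            rw [Finset.sum_const, hcard, nsmul_eq_mul]
        _ ≤ (1/64) * (r ^ k * P) := by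
            have hkn : (k:ℝ) ≤ n := by exact_mod_cast hk
            have hn2 : (2:ℝ) ≤ n := by exact_mod_cast hn
            have e1 : (k : ℝ) * ((16:ℝ) * (n:ℝ)^3)⁻¹ ≤ 1/64 := by
              rw [mul_inv_le_iff₀ (by positivity)]
              have h4 : (4:ℝ) ≤ (n:ℝ)^2 := by nlinarith
              nlinarith [h4, hn0, hkn, mul_le_mul_of_nonneg_right h4 hn0.le]
            calc (k : ℝ) * (((16:ℝ) * (n:ℝ)^3)⁻¹ * (r ^ k * P))
                = ((k : ℝ) * ((16:ℝ) * (n:ℝ)^3)⁻¹) * (r ^ k * P) := by ring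
              _ ≤ (1/64) * (r ^ k * P) := by
                  apply mul_le_mul_of_nonneg_right e1 hrkP.le
    calc (63/64) * (r ^ k * P)
        = P * r ^ k - (1/64) * (r ^ k * P) := by ring
      _ ≤ P * r ^ k - Complex.abs T * r ^ k := by linarith
      _ = (Complex.abs (pA.coeff k * pB.coeff 0) - Complex.abs T) * r ^ k := by
          rw [h1]; ring
      _ ≤ Complex.abs (pA.coeff k * pB.coeff 0 + T) * r ^ k := by
          apply mul_le_mul_of_nonneg_right habs (by positivity)
      _ = Complex.abs (∑ p ∈ Finset.HasAntidiagonal.antidiagonal k, pA.coeff p.1 * pB.coeff p.2)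
            * r ^ k := by rw [← hsplit]
  -- final assembly
  have hcabs : 0 < Complex.abs F.leadingCoeff := by
    rw [AbsoluteValue.pos_iff]
    exact leadingCoeff_ne_zero.mpr hF
  have hmulsum : ∑ i ∈ (Finset.range (n+1)).erase k,
      Complex.abs F.leadingCoeff * (Complex.abs ((pA * pB).coeff i) * r ^ i)
      = Complex.abs F.leadingCoeff * S := by
    rw [hS, Finset.mul_sum]
  rw [hmulsum]
  calc 3/2 * (Complex.abs F.leadingCoeff * S)
      ≤ 3/2 * (Complex.abs F.leadingCoeff * ((31/225) * (r ^ k * P))) := by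
        apply mul_le_mul_of_nonneg_left
          (mul_le_mul_of_nonneg_left hupper hcabs.le) (by norm_num)
    _ < Complex.abs F.leadingCoeff * ((63/64) * (r ^ k * P)) := by
        nlinarith [mul_pos hcabs hrkP]
    _ ≤ Complex.abs F.leadingCoeff * (Complex.abs ((pA * pB).coeff k) * r ^ k) := by
        apply mul_le_mul_of_nonneg_left hlower hcabs.le
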